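/- Suppose n ≥ 4 is even, γ ≠ 0, and β_t ≠ 0 for some 4 ≤ t ≤ n. Then every even derivation of H(β₄,…,β_n,δ,γ) with δ = 0 is nilpotent. (When n is odd, the only exception is t = (n+3)/2: if t ≠ (n+3)/2 then again every even derivation is nilpotent.) -/

import Mathlib

/-- If γ ≠ 0, δ = 0, and β_t ≠ 0 for some 4 ≤ t ≤ n with (n even, or n odd and
t ≠ (n+3)/2, i.e. 2t ≠ n+3), then every even derivation of H(β₄,…,β_n,0,γ) is
nilpotent. -/
theorem statement12 {V : Type*} [AddCommGroup V] [Module ℂ V]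
    (n : ℕ) (hn : 3 ≤ n) (β : ℕ → ℂ) (δ γ : ℂ)
    (bas : Module.Basis (Fin n ⊕ Fin n) ℂ V)
    (eN yN : ℕ → V)
    (heN : ∀ k (h : 1 ≤ k ∧ k ≤ n), eN k = bas (Sum.inl ⟨k - 1, by omega⟩))
    (heN0 : ∀ k, ¬(1 ≤ k ∧ k ≤ n) → eN k = 0)
    (hyN : ∀ k (h : 1 ≤ k ∧ k ≤ n), yN k = bas (Sum.inr ⟨k - 1, by omega⟩))
    (hyN0 : ∀ k, ¬(1 ≤ k ∧ k ≤ n) → yN k = 0)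
    (br : V →ₗ[ℂ] V →ₗ[ℂ] V)
    -- multiplication table (4):
    (hee1 : ∀ i, 1 ≤ i → i ≤ n →
      br (eN i) (eN 1) = if i = 1 then eN 3 else if i = 2 then 0 else eN (i + 1))
    (hee2a : br (eN 1) (eN 2) = ∑ k ∈ Finset.Icc 4 n, β k • eN k)
    (hee2b : br (eN 2) (eN 2) = γ • eN n)
    (hee2c : ∀ i, 3 ≤ i → i ≤ n →
      br (eN i) (eN 2) = ∑ k ∈ Finset.Icc 4 n, β k • eN (i + k - 2))
    (hee0 : ∀ i j, 1 ≤ i → i ≤ n → 3 ≤ j → j ≤ n → br (eN i) (eN j) = 0)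
    (hye1 : ∀ j, 1 ≤ j → j ≤ n → br (yN j) (eN 1) = yN (j + 1))
    (hye2a : br (yN 1) (eN 2) = (∑ k ∈ Finset.Icc 4 n, β k • yN (k - 1)) + δ • yN n)
    (hye2b : ∀ j, 2 ≤ j → j ≤ n →
      br (yN j) (eN 2) = ∑ k ∈ Finset.Icc 4 n, β k • yN (j + k - 2))
    (hye0 : ∀ j i, 1 ≤ j → j ≤ n → 3 ≤ i → i ≤ n → br (yN j) (eN i) = 0)
    (hey1 : ∀ i, 1 ≤ i → i ≤ n → br (eN i) (yN 1) =
      if i = 1 then (1 / 2 : ℂ) • yN 2 else if i = 2 then 0 else (1 / 2 : ℂ) • yN i)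
    (hey0 : ∀ i j, 1 ≤ i → i ≤ n → 2 ≤ j → j ≤ n → br (eN i) (yN j) = 0)
    (hyy1 : ∀ j, 1 ≤ j → j ≤ n →
      br (yN j) (yN 1) = if j = 1 then eN 1 else eN (j + 1))
    (hyy0 : ∀ j k, 1 ≤ j → j ≤ n → 2 ≤ k → k ≤ n → br (yN j) (yN k) = 0)
    -- d is an even derivation:
    (d : Module.End ℂ V)
    (hdE : ∀ x ∈ Submodule.span ℂ (Set.range fun i : Fin n => bas (Sum.inl i)),
      d x ∈ Submodule.span ℂ (Set.range fun i : Fin n => bas (Sum.inl i)))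
    (hdY : ∀ x ∈ Submodule.span ℂ (Set.range fun j : Fin n => bas (Sum.inr j)),
      d x ∈ Submodule.span ℂ (Set.range fun j : Fin n => bas (Sum.inr j)))
    (hder : ∀ u v : V, d (br u v) = br (d u) v + br u (d v))
    (hγ : γ ≠ 0) (hδ : δ = 0) (t : ℕ) (ht1 : 4 ≤ t) (ht2 : t ≤ n) (hβ : β t ≠ 0)
    (hcase : Even n ∨ 2 * t ≠ n + 3) :
    ∃ N : ℕ, d ^ N = 0 := by
  classical
  have hn4 : 4 ≤ n := ht1.trans ht2
  have heZ : ∀ m, n < m → eN m = 0 := fun m hm => heN0 m (by omega)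
  have hyZ : ∀ m, n < m → yN m = 0 := fun m hm => hyN0 m (by omega)
  -- total bracket lemmas
  have H1 : ∀ m, 1 ≤ m → br (yN m) (eN 1) = yN (m + 1) := by
    intro m hm
    by_cases h : m ≤ n
    · exact hye1 m hm h
    · rw [hyZ m (by omega), map_zero, LinearMap.zero_apply, hyZ (m+1) (by omega)]
  have H2 : ∀ j m, 3 ≤ m → br (yN j) (eN m) = 0 := by
    intro j m hm
    by_cases hj : 1 ≤ j ∧ j ≤ n
    · by_cases h : m ≤ n
      · exact hye0 j m hj.1 hj.2 hm h
      · rw [heZ m (by omega), map_zero]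
    · rw [hyN0 j hj, map_zero, LinearMap.zero_apply]
  have H3 : ∀ m, 3 ≤ m → br (eN m) (eN 1) = eN (m + 1) := by
    intro m hm
    by_cases h : m ≤ n
    · rw [hee1 m (by omega) h, if_neg (by omega), if_neg (by omega)]
    · rw [heZ m (by omega), map_zero, LinearMap.zero_apply, heZ (m+1) (by omega)]
  have H4 : ∀ i m, 3 ≤ m → br (eN i) (eN m) = 0 := by
    intro i m hm
    by_cases hi : 1 ≤ i ∧ i ≤ n
    · by_cases h : m ≤ n
      · exact hee0 i m hi.1 hi.2 hm h
      · rw [heZ m (by omega), map_zero]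
    · rw [heN0 i hi, map_zero, LinearMap.zero_apply]
  have H5 : ∀ m, 3 ≤ m → br (eN m) (yN 1) = (1/2 : ℂ) • yN m := by
    intro m hm
    by_cases h : m ≤ n
    · rw [hey1 m (by omega) h, if_neg (by omega), if_neg (by omega)]
    · rw [heZ m (by omega), map_zero, LinearMap.zero_apply, hyZ m (by omega), smul_zero]
  have H6 : ∀ i m, 2 ≤ m → br (eN i) (yN m) = 0 := by
    intro i m hm
    by_cases hi : 1 ≤ i ∧ i ≤ n
    · by_cases h : m ≤ n
      · exact hey0 i m hi.1 hi.2 hm h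
      · rw [hyZ m (by omega), map_zero]
    · rw [heN0 i hi, map_zero, LinearMap.zero_apply]
  have H7 : ∀ m, 2 ≤ m → br (yN m) (eN 2) = ∑ k ∈ Finset.Icc 4 n, β k • yN (m + k - 2) := by
    intro m hm
    by_cases h : m ≤ n
    · exact hye2b m hm h
    · rw [hyZ m (by omega), map_zero, LinearMap.zero_apply]
      refine (Finset.sum_eq_zero fun k hk => ?_).symm
      simp only [Finset.mem_Icc] at hk
      rw [hyZ _ (by omega), smul_zero]
  have H8 : ∀ m, 2 ≤ m → br (yN m) (yN 1) = eN (m + 1) := by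
    intro m hm
    by_cases h : m ≤ n
    · rw [hyy1 m (by omega) h, if_neg (by omega)]
    · rw [hyZ m (by omega), map_zero, LinearMap.zero_apply, heZ (m+1) (by omega)]
  have H9 : ∀ j m, 2 ≤ m → br (yN j) (yN m) = 0 := by
    intro j m hm
    by_cases hj : 1 ≤ j ∧ j ≤ n
    · by_cases h : m ≤ n
      · exact hyy0 j m hj.1 hj.2 hm h
      · rw [hyZ m (by omega), map_zero]
    · rw [hyN0 j hj, map_zero, LinearMap.zero_apply]
  have H10 : ∀ m, 3 ≤ m → br (eN m) (eN 2) = ∑ k ∈ Finset.Icc 4 n, β k • eN (m + k - 2) := by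
    intro m hm
    by_cases h : m ≤ n
    · exact hee2c m hm h
    · rw [heZ m (by omega), map_zero, LinearMap.zero_apply]
      refine (Finset.sum_eq_zero fun k hk => ?_).symm
      simp only [Finset.mem_Icc] at hk
      rw [heZ _ (by omega), smul_zero]
  -- basis identities
  have hebas : ∀ i : Fin n, eN (i.1 + 1) = bas (Sum.inl i) := by
    intro i
    have hi := i.2
    rw [heN (i.1 + 1) ⟨by omega, by omega⟩]
    exact congrArg (fun x => bas (Sum.inl x)) (Fin.ext (by simp))
  have hybas : ∀ i : Fin n, yN (i.1 + 1) = bas (Sum.inr i) := by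
    intro i
    have hi := i.2
    rw [hyN (i.1 + 1) ⟨by omega, by omega⟩]
    exact congrArg (fun x => bas (Sum.inr x)) (Fin.ext (by simp))
  -- coefficient functionals
  have hφE : ∀ (m k : ℕ) (h1 : 1 ≤ m) (h2 : m ≤ n),
      bas.repr (eN k) (Sum.inl ⟨m - 1, by omega⟩) = if k = m then 1 else 0 := by
    intro m k h1 h2
    by_cases hk : 1 ≤ k ∧ k ≤ n
    · rw [heN k hk, bas.repr_self, Finsupp.single_apply]
      by_cases he : k = m
      · rw [if_pos he, if_pos (congrArg Sum.inl (Fin.ext (show k - 1 = m - 1 by omega)))]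
      · rw [if_neg he, if_neg]
        intro hcon
        exact he (by have := congrArg (Sum.elim Fin.val Fin.val) hcon; simp at this; omega)
    · rw [heN0 k hk, map_zero, Finsupp.zero_apply, if_neg (by omega)]
  have hφY : ∀ (m k : ℕ) (h1 : 1 ≤ m) (h2 : m ≤ n),
      bas.repr (yN k) (Sum.inr ⟨m - 1, by omega⟩) = if k = m then 1 else 0 := by
    intro m k h1 h2
    by_cases hk : 1 ≤ k ∧ k ≤ n
    · rw [hyN k hk, bas.repr_self, Finsupp.single_apply]
      by_cases he : k = m
      · rw [if_pos he, if_pos (congrArg Sum.inr (Fin.ext (show k - 1 = m - 1 by omega)))]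
      · rw [if_neg he, if_neg]
        intro hcon
        exact he (by have := congrArg (Sum.elim Fin.val Fin.val) hcon; simp at this; omega)
    · rw [hyN0 k hk, map_zero, Finsupp.zero_apply, if_neg (by omega)]
  -- extraction lemmas
  have hextE : ∀ (s : Finset ℕ) (f : ℕ → ℂ) (g : ℕ → ℕ) (m : ℕ), 1 ≤ m → m ≤ n →
      (∑ k ∈ s, f k • eN (g k)) = 0 →
      (∑ k ∈ s, if g k = m then f k else 0) = 0 := by
    intro s f g m h1 h2 hsum
    have hr : bas.repr (∑ k ∈ s, f k • eN (g k)) (Sum.inl ⟨m - 1, by omega⟩)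
        = ∑ k ∈ s, (if g k = m then f k else 0) := by
      rw [map_sum, Finset.sum_apply']
      refine Finset.sum_congr rfl fun k _ => ?_
      rw [map_smul, Finsupp.smul_apply, hφE m (g k) h1 h2, smul_eq_mul, mul_ite, mul_one, mul_zero]
    rw [← hr, hsum, map_zero, Finsupp.zero_apply]
  have hextY : ∀ (s : Finset ℕ) (f : ℕ → ℂ) (g : ℕ → ℕ) (m : ℕ), 1 ≤ m → m ≤ n →
      (∑ k ∈ s, f k • yN (g k)) = 0 →
      (∑ k ∈ s, if g k = m then f k else 0) = 0 := by
    intro s f g m h1 h2 hsum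
    have hr : bas.repr (∑ k ∈ s, f k • yN (g k)) (Sum.inr ⟨m - 1, by omega⟩)
        = ∑ k ∈ s, (if g k = m then f k else 0) := by
      rw [map_sum, Finset.sum_apply']
      refine Finset.sum_congr rfl fun k _ => ?_
      rw [map_smul, Finsupp.smul_apply, hφY m (g k) h1 h2, smul_eq_mul, mul_ite, mul_one, mul_zero]
    rw [← hr, hsum, map_zero, Finsupp.zero_apply]
  -- span membership facts
  have hinl0 : ∀ v ∈ Submodule.span ℂ (Set.range fun j : Fin n => bas (Sum.inr j)),
      ∀ i : Fin n, bas.repr v (Sum.inl i) = 0 := by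
    intro v hv
    induction hv using Submodule.span_induction with
    | mem x hx =>
      obtain ⟨j, rfl⟩ := hx
      intro i
      rw [bas.repr_self, Finsupp.single_apply, if_neg (by simp)]
    | zero => intro i; simp
    | add x y hx hy ihx ihy => intro i; rw [map_add, Finsupp.add_apply, ihx i, ihy i, add_zero]
    | smul a x hx ih => intro i; rw [map_smul, Finsupp.smul_apply, ih i, smul_zero]
  have hinr0 : ∀ v ∈ Submodule.span ℂ (Set.range fun i : Fin n => bas (Sum.inl i)),
      ∀ j : Fin n, bas.repr v (Sum.inr j) = 0 := by
    intro v hv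
    induction hv using Submodule.span_induction with
    | mem x hx =>
      obtain ⟨j, rfl⟩ := hx
      intro i
      rw [bas.repr_self, Finsupp.single_apply, if_neg (by simp)]
    | zero => intro i; simp
    | add x y hx hy ihx ihy => intro i; rw [map_add, Finsupp.add_apply, ihx i, ihy i, add_zero]
    | smul a x hx ih => intro i; rw [map_smul, Finsupp.smul_apply, ih i, smul_zero]
  have hy1mem : d (yN 1) ∈ Submodule.span ℂ (Set.range fun j : Fin n => bas (Sum.inr j)) := by
    refine hdY _ (Submodule.subset_span ⟨⟨0, by omega⟩, ?_⟩)
    rw [hyN 1 ⟨le_rfl, by omega⟩]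
  have he2mem : d (eN 2) ∈ Submodule.span ℂ (Set.range fun i : Fin n => bas (Sum.inl i)) := by
    refine hdE _ (Submodule.subset_span ⟨⟨1, by omega⟩, ?_⟩)
    rw [heN 2 ⟨by omega, by omega⟩]
  -- the coefficient functions
  set c : ℕ → ℂ := fun j =>
    if h : 1 ≤ j ∧ j ≤ n then bas.repr (d (yN 1)) (Sum.inr ⟨j - 1, by omega⟩) else 0 with hcdef
  set b : ℕ → ℂ := fun j =>
    if h : 1 ≤ j ∧ j ≤ n then bas.repr (d (eN 2)) (Sum.inl ⟨j - 1, by omega⟩) else 0 with hbdef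
  have hcval : ∀ m : Fin n, c (m.1 + 1) = bas.repr (d (yN 1)) (Sum.inr m) := by
    intro m
    have hm := m.2
    simp only [hcdef]
    rw [dif_pos ⟨by omega, by omega⟩]
    exact congrArg (fun x => bas.repr (d (yN 1)) (Sum.inr x)) (Fin.ext (show m.1 + 1 - 1 = m.1 by omega))
  have hbval : ∀ m : Fin n, b (m.1 + 1) = bas.repr (d (eN 2)) (Sum.inl m) := by
    intro m
    have hm := m.2
    simp only [hbdef]
    rw [dif_pos ⟨by omega, by omega⟩]
    exact congrArg (fun x => bas.repr (d (eN 2)) (Sum.inl x)) (Fin.ext (show m.1 + 1 - 1 = m.1 by omega))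
  -- expansions
  have hdy1 : d (yN 1) = ∑ k ∈ Finset.Icc 1 n, c k • yN k := by
    conv_lhs => rw [← bas.sum_repr (d (yN 1))]
    rw [Fintype.sum_sum_type]
    have h1 : ∑ i : Fin n, bas.repr (d (yN 1)) (Sum.inl i) • bas (Sum.inl i) = 0 :=
      Finset.sum_eq_zero fun i _ => by rw [hinl0 _ hy1mem i, zero_smul]
    rw [h1, zero_add]
    refine Finset.sum_bij' (fun (j : Fin n) _ => j.1 + 1)
      (fun k hk => ⟨k - 1, by simp only [Finset.mem_Icc] at hk; omega⟩) ?_ ?_ ?_ ?_ ?_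
    · intro a _; have := a.2; simp only [Finset.mem_Icc]; omega
    · intro a _; exact Finset.mem_univ _
    · intro a _; exact Fin.ext (by simp)
    · intro a ha; simp only [Finset.mem_Icc] at ha; show a - 1 + 1 = a; omega
    · intro a _; rw [hcval a, hybas a]
  have hde2sum : d (eN 2) = ∑ k ∈ Finset.Icc 1 n, b k • eN k := by
    conv_lhs => rw [← bas.sum_repr (d (eN 2))]
    rw [Fintype.sum_sum_type]
    have h1 : ∑ i : Fin n, bas.repr (d (eN 2)) (Sum.inr i) • bas (Sum.inr i) = 0 :=
      Finset.sum_eq_zero fun i _ => by rw [hinr0 _ he2mem i, zero_smul]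
    rw [h1, add_zero]
    refine Finset.sum_bij' (fun (j : Fin n) _ => j.1 + 1)
      (fun k hk => ⟨k - 1, by simp only [Finset.mem_Icc] at hk; omega⟩) ?_ ?_ ?_ ?_ ?_
    · intro a _; have := a.2; simp only [Finset.mem_Icc]; omega
    · intro a _; exact Finset.mem_univ _
    · intro a _; exact Fin.ext (by simp)
    · intro a ha; simp only [Finset.mem_Icc] at ha; show a - 1 + 1 = a; omega
    · intro a _; rw [hbval a, hebas a]
  -- splitting Icc 1 n
  have hI : Finset.Icc 1 n = insert 1 (Finset.Icc 2 n) := by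
    ext x; simp only [Finset.mem_Icc, Finset.mem_insert]; omega
  have h1ni : (1 : ℕ) ∉ Finset.Icc 2 n := by simp
  -- formula for d e1
  have hde1 : d (eN 1) = (2 * c 1) • eN 1 + ∑ k ∈ Finset.Icc 2 n, c k • eN (k + 1) := by
    have h0 := hder (yN 1) (yN 1)
    rw [hyy1 1 le_rfl (by omega), if_pos rfl, hdy1] at h0
    have hA : br (∑ k ∈ Finset.Icc 1 n, c k • yN k) (yN 1)
        = c 1 • eN 1 + ∑ k ∈ Finset.Icc 2 n, c k • eN (k + 1) := by
      rw [map_sum, LinearMap.sum_apply, hI, Finset.sum_insert h1ni]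
      congr 1
      · rw [map_smul, LinearMap.smul_apply, hyy1 1 le_rfl (by omega), if_pos rfl]
      · refine Finset.sum_congr rfl fun k hk => ?_
        simp only [Finset.mem_Icc] at hk
        rw [map_smul, LinearMap.smul_apply, H8 k hk.1]
    have hB : br (yN 1) (∑ k ∈ Finset.Icc 1 n, c k • yN k) = c 1 • eN 1 := by
      rw [map_sum, hI, Finset.sum_insert h1ni]
      have : ∑ k ∈ Finset.Icc 2 n, br (yN 1) (c k • yN k) = 0 :=
        Finset.sum_eq_zero fun k hk => by
          simp only [Finset.mem_Icc] at hk
          rw [map_smul, H9 1 k hk.1, smul_zero]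
      rw [this, add_zero, map_smul, hyy1 1 le_rfl (by omega), if_pos rfl]
    rw [h0, hA, hB]
    module
  -- d e2 is supported on e2 and en
  have hbrde2 : ∑ i ∈ Finset.Icc 1 n, b i • eN (if i = 1 then 3 else if i = 2 then 0 else i + 1) = 0 := by
    have h0 := hder (eN 2) (eN 1)
    rw [hee1 2 (by omega) (by omega), if_neg (by omega), if_pos rfl, map_zero] at h0
    have hB : br (eN 2) (d (eN 1)) = 0 := by
      rw [hde1, map_add, map_smul, hee1 2 (by omega) (by omega), if_neg (by omega), if_pos rfl,
        smul_zero, zero_add, map_sum]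
      refine Finset.sum_eq_zero fun k hk => ?_
      simp only [Finset.mem_Icc] at hk
      rw [map_smul, H4 2 (k + 1) (by omega), smul_zero]
    rw [hB, add_zero] at h0
    have h1 : br (d (eN 2)) (eN 1)
        = ∑ i ∈ Finset.Icc 1 n, b i • eN (if i = 1 then 3 else if i = 2 then 0 else i + 1) := by
      rw [hde2sum, map_sum, LinearMap.sum_apply]
      refine Finset.sum_congr rfl fun i hi => ?_
      simp only [Finset.mem_Icc] at hi
      rw [map_smul, LinearMap.smul_apply, hee1 i hi.1 hi.2]
      congr 1
      split_ifs with ha hb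
      · rfl
      · exact (heN0 0 (by omega)).symm
      · rfl
    rw [← h1, ← h0]
  have hb1 : b 1 = 0 := by
    have h := hextE _ _ _ 3 (by omega) (by omega) hbrde2
    rw [Finset.sum_eq_single_of_mem 1 (by simp only [Finset.mem_Icc]; omega)] at h
    · rwa [if_pos (by norm_num)] at h
    · intro k hk hne
      simp only [Finset.mem_Icc] at hk
      refine if_neg ?_
      intro hcon
      split_ifs at hcon <;> omega
  have hbmid : ∀ i, 3 ≤ i → i ≤ n - 1 → b i = 0 := by
    intro i hi1 hi2
    have h := hextE _ _ _ (i + 1) (by omega) (by omega) hbrde2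
    rw [Finset.sum_eq_single_of_mem i (by simp only [Finset.mem_Icc]; omega)] at h
    · rwa [if_pos (by rw [if_neg (by omega), if_neg (by omega)])] at h
    · intro k hk hne
      simp only [Finset.mem_Icc] at hk
      refine if_neg ?_
      intro hcon
      split_ifs at hcon <;> omega
  have hde2 : d (eN 2) = b 2 • eN 2 + b n • eN n := by
    rw [hde2sum, ← Finset.add_sum_erase _ _ (show 2 ∈ Finset.Icc 1 n by
        simp only [Finset.mem_Icc]; omega),
      ← Finset.add_sum_erase _ _ (show n ∈ (Finset.Icc 1 n).erase 2 by
        simp only [Finset.mem_erase, Finset.mem_Icc]; omega)]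
    have : ∑ x ∈ ((Finset.Icc 1 n).erase 2).erase n, b x • eN x = 0 := by
      refine Finset.sum_eq_zero fun x hx => ?_
      simp only [Finset.mem_erase, Finset.mem_Icc] at hx
      rcases Nat.lt_or_ge x 2 with h | h
      · have : x = 1 := by omega
        rw [this, hb1, zero_smul]
      · rw [hbmid x (by omega) (by omega), zero_smul]
    rw [this, add_zero]
  -- recursion formula for d e_k, k ≥ 3
  have hC : ∀ k, 3 ≤ k → d (eN k)
      = ((2 * (k : ℂ) - 2) * c 1) • eN k + ∑ j ∈ Finset.Icc 2 n, c j • eN (k + j - 1) := by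
    intro k hk
    induction k, hk using Nat.le_induction with
    | base =>
      have h0 := hder (eN 1) (eN 1)
      rw [hee1 1 le_rfl (by omega), if_pos rfl, hde1] at h0
      have hA : br ((2 * c 1) • eN 1 + ∑ k ∈ Finset.Icc 2 n, c k • eN (k + 1)) (eN 1)
          = (2 * c 1) • eN 3 + ∑ j ∈ Finset.Icc 2 n, c j • eN (3 + j - 1) := by
        rw [map_add, map_smul, LinearMap.add_apply, LinearMap.smul_apply,
          hee1 1 le_rfl (by omega), if_pos rfl, map_sum, LinearMap.sum_apply]
        congr 1
        refine Finset.sum_congr rfl fun j hj => ?_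
        simp only [Finset.mem_Icc] at hj
        rw [map_smul, LinearMap.smul_apply, H3 (j + 1) (by omega),
          show j + 1 + 1 = 3 + j - 1 by omega]
      have hB : br (eN 1) ((2 * c 1) • eN 1 + ∑ k ∈ Finset.Icc 2 n, c k • eN (k + 1))
          = (2 * c 1) • eN 3 := by
        rw [map_add, map_smul, hee1 1 le_rfl (by omega), if_pos rfl]
        have : ∑ k ∈ Finset.Icc 2 n, br (eN 1) (c k • eN (k + 1)) = 0 :=
          Finset.sum_eq_zero fun k hk => by
            simp only [Finset.mem_Icc] at hk
            rw [map_smul, H4 1 (k + 1) (by omega), smul_zero]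
        rw [map_sum, this, add_zero]
      rw [h0, hA, hB]
      have h3 : ((2 : ℂ) * (3 : ℕ) - 2) = 4 := by norm_num
      rw [h3]
      module
    | succ k hk ih =>
      have h0 := hder (eN k) (eN 1)
      rw [H3 k hk, ih, hde1] at h0
      have hA : br (((2 * (k : ℂ) - 2) * c 1) • eN k + ∑ j ∈ Finset.Icc 2 n, c j • eN (k + j - 1)) (eN 1)
          = ((2 * (k : ℂ) - 2) * c 1) • eN (k + 1)
            + ∑ j ∈ Finset.Icc 2 n, c j • eN (k + 1 + j - 1) := by
        rw [map_add, map_smul, LinearMap.add_apply, LinearMap.smul_apply, H3 k hk,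
          map_sum, LinearMap.sum_apply]
        congr 1
        refine Finset.sum_congr rfl fun j hj => ?_
        simp only [Finset.mem_Icc] at hj
        rw [map_smul, LinearMap.smul_apply, H3 (k + j - 1) (by omega),
          show k + j - 1 + 1 = k + 1 + j - 1 by omega]
      have hB : br (eN k) ((2 * c 1) • eN 1 + ∑ j ∈ Finset.Icc 2 n, c j • eN (j + 1))
          = (2 * c 1) • eN (k + 1) := by
        rw [map_add, map_smul, H3 k hk]
        have : ∑ j ∈ Finset.Icc 2 n, br (eN k) (c j • eN (j + 1)) = 0 :=
          Finset.sum_eq_zero fun j hj => by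
            simp only [Finset.mem_Icc] at hj
            rw [map_smul, H4 k (j + 1) (by omega), smul_zero]
        rw [map_sum, this, add_zero]
      rw [h0, hA, hB]
      push_cast
      module
  -- recursion formula for d y_k, k ≥ 2
  have hD : ∀ k, 2 ≤ k → d (yN k)
      = ((2 * (k : ℂ) - 1) * c 1) • yN k
        + ∑ j ∈ Finset.Icc 2 n, c j • yN (k + j - 1) := by
    intro k hk
    induction k, hk using Nat.le_induction with
    | base =>
      have h0 := hder (eN 1) (yN 1)
      rw [hey1 1 le_rfl (by omega), if_pos rfl, hde1] at h0
      have hA : br ((2 * c 1) • eN 1 + ∑ k ∈ Finset.Icc 2 n, c k • eN (k + 1)) (yN 1)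
          = (2 * c 1) • ((1/2 : ℂ) • yN 2)
            + ∑ j ∈ Finset.Icc 2 n, c j • ((1/2 : ℂ) • yN (j + 1)) := by
        rw [map_add, map_smul, LinearMap.add_apply, LinearMap.smul_apply,
          hey1 1 le_rfl (by omega), if_pos rfl, map_sum, LinearMap.sum_apply]
        congr 1
        refine Finset.sum_congr rfl fun j hj => ?_
        simp only [Finset.mem_Icc] at hj
        rw [map_smul, LinearMap.smul_apply, H5 (j + 1) (by omega)]
      have hB : br (eN 1) (d (yN 1)) = c 1 • ((1/2 : ℂ) • yN 2) := by
        rw [hdy1, map_sum, hI, Finset.sum_insert h1ni]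
        have : ∑ k ∈ Finset.Icc 2 n, br (eN 1) (c k • yN k) = 0 :=
          Finset.sum_eq_zero fun k hk => by
            simp only [Finset.mem_Icc] at hk
            rw [map_smul, H6 1 k (by omega), smul_zero]
        rw [this, add_zero, map_smul, hey1 1 le_rfl (by omega), if_pos rfl]
      rw [hA, hB, map_smul] at h0
      have h2 : d (yN 2) = (2 : ℂ) • ((1/2 : ℂ) • d (yN 2)) := by
        rw [smul_smul]; norm_num
      have hhalf : ∑ j ∈ Finset.Icc 2 n, c j • ((1/2 : ℂ) • yN (j + 1))
          = (1/2 : ℂ) • ∑ j ∈ Finset.Icc 2 n, c j • yN (j + 1) := by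
        rw [Finset.smul_sum]
        exact Finset.sum_congr rfl fun j _ => (smul_comm _ _ _).symm
      have htgt : ∑ j ∈ Finset.Icc 2 n, c j • yN (2 + j - 1)
          = ∑ j ∈ Finset.Icc 2 n, c j • yN (j + 1) :=
        Finset.sum_congr rfl fun j _ => by rw [show 2 + j - 1 = j + 1 by omega]
      rw [h2, h0, hhalf, htgt]
      have h32 : ((2 : ℂ) * (2 : ℕ) - 1) = 3 := by norm_num
      rw [h32]
      module
    | succ k hk ih =>
      have h0 := hder (yN k) (eN 1)
      rw [H1 k (by omega), ih, hde1] at h0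
      have hA : br (((2 * (k : ℂ) - 1) * c 1) • yN k
            + ∑ j ∈ Finset.Icc 2 n, c j • yN (k + j - 1)) (eN 1)
          = ((2 * (k : ℂ) - 1) * c 1) • yN (k + 1)
            + ∑ j ∈ Finset.Icc 2 n, c j • yN (k + 1 + j - 1) := by
        rw [map_add, map_smul, LinearMap.add_apply, LinearMap.smul_apply, H1 k (by omega),
          map_sum, LinearMap.sum_apply]
        congr 1
        refine Finset.sum_congr rfl fun j hj => ?_
        simp only [Finset.mem_Icc] at hj
        rw [map_smul, LinearMap.smul_apply, H1 (k + j - 1) (by omega),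
          show k + j - 1 + 1 = k + 1 + j - 1 by omega]
      have hB : br (yN k) ((2 * c 1) • eN 1 + ∑ j ∈ Finset.Icc 2 n, c j • eN (j + 1))
          = (2 * c 1) • yN (k + 1) := by
        rw [map_add, map_smul, H1 k (by omega)]
        have : ∑ j ∈ Finset.Icc 2 n, br (yN k) (c j • eN (j + 1)) = 0 :=
          Finset.sum_eq_zero fun j hj => by
            simp only [Finset.mem_Icc] at hj
            rw [map_smul, H2 k (j + 1) (by omega), smul_zero]
        rw [map_sum, this, add_zero]
      rw [h0, hA, hB]
      push_cast
      module
  -- relation from e2·e2 = γ e_n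
  have hR1 : γ * ((2 * (n : ℂ) - 2) * c 1) = 2 * (b 2 * γ) := by
    have h0 := hder (eN 2) (eN 2)
    rw [hee2b] at h0
    have hL : d (γ • eN n) = (γ * ((2 * (n : ℂ) - 2) * c 1)) • eN n := by
      rw [map_smul, hC n (by omega)]
      have hz : ∑ j ∈ Finset.Icc 2 n, c j • eN (n + j - 1) = 0 :=
        Finset.sum_eq_zero fun j hj => by
          simp only [Finset.mem_Icc] at hj
          rw [heZ (n + j - 1) (by omega), smul_zero]
      rw [hz, add_zero, smul_smul]
    have hA : br (d (eN 2)) (eN 2) = (b 2 * γ) • eN n := by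
      rw [hde2, map_add, map_smul, map_smul, LinearMap.add_apply, LinearMap.smul_apply,
        LinearMap.smul_apply, hee2b, H10 n (by omega)]
      have hz : ∑ k ∈ Finset.Icc 4 n, β k • eN (n + k - 2) = 0 :=
        Finset.sum_eq_zero fun k hk => by
          simp only [Finset.mem_Icc] at hk
          rw [heZ _ (by omega), smul_zero]
      rw [hz, smul_zero, add_zero, smul_smul]
    have hB : br (eN 2) (d (eN 2)) = (b 2 * γ) • eN n := by
      rw [hde2, map_add, map_smul, map_smul, hee2b, H4 2 n (by omega), smul_zero, add_zero,
        smul_smul]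
    rw [hL, hA, hB] at h0
    have h1 : (γ * ((2 * (n : ℂ) - 2) * c 1) - 2 * (b 2 * γ)) • eN n = 0 := by
      rw [sub_smul, h0]
      module
    have hnz : eN n ≠ 0 := by
      rw [heN n ⟨by omega, le_rfl⟩]; exact bas.ne_zero _
    rcases smul_eq_zero.mp h1 with h | h
    · exact sub_eq_zero.mp h
    · exact absurd h hnz
  -- relation from y2·e2
  have hR2key : b 2 = (2 * (t : ℂ) - 4) * c 1 := by
    have h0 := hder (yN 2) (eN 2)
    rw [hye2b 2 le_rfl (by omega)] at h0
    have hL : d (∑ k ∈ Finset.Icc 4 n, β k • yN (2 + k - 2))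
        = ∑ k ∈ Finset.Icc 4 n, (β k * ((2 * (k : ℂ) - 1) * c 1)) • yN k
          + ∑ k ∈ Finset.Icc 4 n, ∑ j ∈ Finset.Icc 2 n, (β k * c j) • yN (k + j - 1) := by
      rw [map_sum, ← Finset.sum_add_distrib]
      refine Finset.sum_congr rfl fun k hk => ?_
      simp only [Finset.mem_Icc] at hk
      rw [show 2 + k - 2 = k by omega, map_smul, hD k (by omega), smul_add, smul_smul,
        Finset.smul_sum]
      congr 1
      refine Finset.sum_congr rfl fun j hj => ?_
      rw [smul_smul]
    have hA : br (d (yN 2)) (eN 2)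
        = ((2 * ((2 : ℕ) : ℂ) - 1) * c 1) • ∑ k ∈ Finset.Icc 4 n, β k • yN (2 + k - 2)
          + ∑ j ∈ Finset.Icc 2 n, ∑ k ∈ Finset.Icc 4 n, (c j * β k) • yN (j + k - 1) := by
      rw [hD 2 le_rfl, map_add, map_smul, LinearMap.add_apply, LinearMap.smul_apply,
        hye2b 2 le_rfl (by omega), map_sum, LinearMap.sum_apply]
      congr 1
      refine Finset.sum_congr rfl fun j hj => ?_
      simp only [Finset.mem_Icc] at hj
      rw [map_smul, LinearMap.smul_apply, H7 (2 + j - 1) (by omega), Finset.smul_sum]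
      refine Finset.sum_congr rfl fun k hk => ?_
      simp only [Finset.mem_Icc] at hk
      rw [smul_smul, show 2 + j - 1 + k - 2 = j + k - 1 by omega]
    have hB : br (yN 2) (d (eN 2)) = b 2 • ∑ k ∈ Finset.Icc 4 n, β k • yN (2 + k - 2) := by
      rw [hde2, map_add, map_smul, map_smul, hye2b 2 le_rfl (by omega), H2 2 n (by omega),
        smul_zero, add_zero]
    rw [hL, hA, hB] at h0
    have hswap : ∑ k ∈ Finset.Icc 4 n, ∑ j ∈ Finset.Icc 2 n, (β k * c j) • yN (k + j - 1)
        = ∑ j ∈ Finset.Icc 2 n, ∑ k ∈ Finset.Icc 4 n, (c j * β k) • yN (j + k - 1) := by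
      rw [Finset.sum_comm]
      refine Finset.sum_congr rfl fun j _ => Finset.sum_congr rfl fun k _ => ?_
      rw [mul_comm (β k) (c j), show k + j - 1 = j + k - 1 by omega]
    rw [hswap] at h0
    set S := ∑ j ∈ Finset.Icc 2 n, ∑ k ∈ Finset.Icc 4 n, (c j * β k) • yN (j + k - 1) with hS
    set X := ∑ k ∈ Finset.Icc 4 n, (β k * ((2 * (k : ℂ) - 1) * c 1)) • yN k with hX
    set Y := ∑ k ∈ Finset.Icc 4 n, β k • yN (2 + k - 2) with hY
    have h1 : X = ((2 * ((2 : ℕ) : ℂ) - 1) * c 1) • Y + b 2 • Y := by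
      rw [add_right_comm (((2 * ((2 : ℕ) : ℂ) - 1) * c 1) • Y) S (b 2 • Y)] at h0
      exact add_right_cancel h0
    have hY1 : ((2 * ((2 : ℕ) : ℂ) - 1) * c 1) • Y
        = ∑ k ∈ Finset.Icc 4 n, (((2 * ((2 : ℕ) : ℂ) - 1) * c 1) * β k) • yN k := by
      rw [hY, Finset.smul_sum]
      refine Finset.sum_congr rfl fun k hk => ?_
      simp only [Finset.mem_Icc] at hk
      rw [smul_smul, show 2 + k - 2 = k by omega]
    have hY2 : b 2 • Y = ∑ k ∈ Finset.Icc 4 n, (b 2 * β k) • yN k := by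
      rw [hY, Finset.smul_sum]
      refine Finset.sum_congr rfl fun k hk => ?_
      simp only [Finset.mem_Icc] at hk
      rw [smul_smul, show 2 + k - 2 = k by omega]
    have h2 : ∑ k ∈ Finset.Icc 4 n,
        ((β k * ((2 * (k : ℂ) - 1) * c 1)) - ((2 * ((2 : ℕ) : ℂ) - 1) * c 1) * β k - b 2 * β k)
          • yN k = 0 := by
      simp only [sub_smul, Finset.sum_sub_distrib]
      rw [← hX, ← hY1, ← hY2, h1]
      abel
    have h3 := hextY _ _ _ t (by omega) ht2 h2
    rw [Finset.sum_ite_eq'] at h3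
    rw [if_pos (by simp only [Finset.mem_Icc]; omega)] at h3
    have h4 : β t * ((2 * (t : ℂ) - 1) * c 1 - (2 * ((2 : ℕ) : ℂ) - 1) * c 1 - b 2) = 0 := by
      push_cast at h3 ⊢
      linear_combination h3
    rcases mul_eq_zero.mp h4 with h | h
    · exact absurd h hβ
    · push_cast at h ⊢
      linear_combination -h
  -- conclude c 1 = 0 and b 2 = 0
  have hc1 : c 1 = 0 := by
    have hne : (n : ℂ) + 3 - 2 * t ≠ 0 := by
      intro h
      have h' : ((n + 3 : ℕ) : ℂ) = ((2 * t : ℕ) : ℂ) := by push_cast; linear_combination h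
      have hnat : n + 3 = 2 * t := by exact_mod_cast h'
      rcases hcase with he | hne2
      · rcases he with ⟨r, hr⟩; omega
      · omega
    have h5 : γ * (((n : ℂ) + 3 - 2 * t) * (2 * c 1)) = 0 := by
      rw [hR2key] at hR1
      linear_combination hR1
    rcases mul_eq_zero.mp h5 with h | h
    · exact absurd h hγ
    rcases mul_eq_zero.mp h with h | h
    · exact absurd h hne
    rcases mul_eq_zero.mp h with h | h
    · norm_num at h
    · exact h
  have hb2 : b 2 = 0 := by rw [hR2key, hc1, mul_zero]
  -- the filtration
  set wt : Fin n ⊕ Fin n → ℕ := Sum.elim Fin.val Fin.val with hwt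
  set W : ℕ → Submodule ℂ V := fun m => Submodule.span ℂ (⇑bas '' {p | m ≤ wt p}) with hW
  have hmemE : ∀ m k : ℕ, 1 ≤ k → m + 1 ≤ k → eN k ∈ W m := by
    intro m k h1 h2
    by_cases h : k ≤ n
    · rw [heN k ⟨h1, h⟩]
      exact Submodule.subset_span ⟨Sum.inl ⟨k - 1, by omega⟩, show m ≤ k - 1 by omega, rfl⟩
    · rw [heZ k (by omega)]; exact zero_mem _
  have hmemY : ∀ m k : ℕ, 1 ≤ k → m + 1 ≤ k → yN k ∈ W m := by
    intro m k h1 h2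
    by_cases h : k ≤ n
    · rw [hyN k ⟨h1, h⟩]
      exact Submodule.subset_span ⟨Sum.inr ⟨k - 1, by omega⟩, show m ≤ k - 1 by omega, rfl⟩
    · rw [hyZ k (by omega)]; exact zero_mem _
  have hWanti : ∀ m m' : ℕ, m ≤ m' → W m' ≤ W m := by
    intro m m' h
    exact Submodule.span_mono (Set.image_mono fun p hp => le_trans h hp)
  have hdW : ∀ p : Fin n ⊕ Fin n, d (bas p) ∈ W (wt p + 1) := by
    intro p
    rcases p with i | i
    · rw [← hebas i]
      simp only [hwt, Sum.elim_inl]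
      rcases Nat.lt_or_ge i.1 2 with h2 | h2
      · by_cases h0 : i.1 = 0
        · rw [h0, hde1, hc1, mul_zero, zero_smul]
          simp only [zero_add]
          exact Submodule.sum_mem _ fun k hk => by
            simp only [Finset.mem_Icc] at hk
            exact Submodule.smul_mem _ _ (hmemE 1 (k + 1) (by omega) (by omega))
        · have h1 : i.1 = 1 := by omega
          rw [h1]
          show d (eN 2) ∈ W 2
          rw [hde2, hb2, zero_smul, zero_add]
          exact Submodule.smul_mem _ _ (hmemE 2 n (by omega) (by omega))
      · rw [hC (i.1 + 1) (by omega), hc1, mul_zero, zero_smul, zero_add]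
        exact Submodule.sum_mem _ fun j hj => by
          simp only [Finset.mem_Icc] at hj
          exact Submodule.smul_mem _ _ (hmemE (i.1 + 1) (i.1 + 1 + j - 1) (by omega) (by omega))
    · rw [← hybas i]
      simp only [hwt, Sum.elim_inr]
      by_cases h0 : i.1 = 0
      · rw [h0, hdy1, hI, Finset.sum_insert h1ni, hc1, zero_smul]
        simp only [zero_add]
        exact Submodule.sum_mem _ fun k hk => by
          simp only [Finset.mem_Icc] at hk
          exact Submodule.smul_mem _ _ (hmemY 1 k (by omega) (by omega))
      · rw [hD (i.1 + 1) (by omega), hc1, mul_zero, zero_smul, zero_add]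
        exact Submodule.sum_mem _ fun j hj => by
          simp only [Finset.mem_Icc] at hj
          exact Submodule.smul_mem _ _ (hmemY (i.1 + 1) (i.1 + 1 + j - 1) (by omega) (by omega))
  have hstepW : ∀ m : ℕ, ∀ v ∈ W m, d v ∈ W (m + 1) := by
    intro m v hv
    induction hv using Submodule.span_induction with
    | mem x hx =>
      obtain ⟨p, hp, rfl⟩ := hx
      exact hWanti (m + 1) (wt p + 1) (by exact Nat.succ_le_succ hp) (hdW p)
    | zero => rw [map_zero]; exact zero_mem _
    | add x y hx hy ihx ihy => rw [map_add]; exact add_mem ihx ihy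
    | smul a x hx ih => rw [map_smul]; exact Submodule.smul_mem _ _ ih
  have hW0 : ∀ v : V, v ∈ W 0 := by
    intro v
    have : W 0 = ⊤ := by
      show Submodule.span ℂ (⇑bas '' {p : Fin n ⊕ Fin n | 0 ≤ wt p}) = ⊤
      have hs : {p : Fin n ⊕ Fin n | 0 ≤ wt p} = Set.univ := by
        ext p; simp
      rw [hs, Set.image_univ, bas.span_eq]
    rw [this]; exact Submodule.mem_top
  have hWn : W n = ⊥ := by
    show Submodule.span ℂ (⇑bas '' {p : Fin n ⊕ Fin n | n ≤ wt p}) = ⊥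
    have hs : ⇑bas '' {p : Fin n ⊕ Fin n | n ≤ wt p} = ∅ := by
      refine Set.image_eq_empty.mpr ?_
      ext p
      simp only [Set.mem_setOf_eq, Set.mem_empty_iff_false, iff_false, not_le]
      rcases p with i | i
      · simp [hwt]
      · simp [hwt]
    rw [hs, Submodule.span_empty]
  have hiter : ∀ m : ℕ, ∀ v : V, (⇑d)^[m] v ∈ W m := by
    intro m
    induction m with
    | zero => intro v; exact hW0 v
    | succ m ih =>
      intro v
      rw [Function.iterate_succ_apply']
      exact hstepW m _ (ih v)
  refine ⟨n, ?_⟩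
  ext v
  have h := hiter n v
  rw [hWn, Submodule.mem_bot] at h
  rw [LinearMap.zero_apply, ← h, Module.End.pow_apply]
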